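/- Let m, k, d ≥ 1, let U = {u_1, …, u_m} and let T_1, …, T_d ⊆ U. Define the ground set N = {a_{ij} : i ∈ [m], j ∈ [k]} ∪ {b_r : r ∈ [d]} and, for each i ∈ [m], the linear loss ℓ_i(S) = Σ_{e ∈ S} c_i(e) for S ⊆ N, where c_i(a_{ij}) = 1/k for all j, c_i(a_{i'j}) = 0 for i' ≠ i, c_i(b_r) = 2/m if u_i ∈ T_r, and c_i(b_r) = 1/(k·m) if u_i ∉ T_r. Let w ∈ Δ_m and let i* ∈ [m] satisfy w_{i*} = min_{i ∈ [m]} w_i. Then the set S* = {a_{i*,1}, …, a_{i*,k}} satisfies Σ_{i=1}^m w_i·ℓ_i(S*) = w_{i*} and Σ_{i=1}^m w_i·ℓ_i(S*) ≤ Σ_{i=1}^m w_i·ℓ_i(S) for every S ⊆ N with |S| = k; that is, S* is an exactly optimal Bayesian solution for the distribution w over the losses ℓ_1, …, ℓ_m. -/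

import Mathlib

open Finset

/-- The ground set of the set-packing reduction: elements `a_{ij}` (left) for
`i ∈ [m]`, `j ∈ [k]`, and elements `b_r` (right) for `r ∈ [d]`. -/
abbrev PackingElem (m k d : ℕ) := (Fin m × Fin k) ⊕ Fin d

/-- The per-element loss coefficients `c_i` of the set-packing reduction. -/
noncomputable def lossCoeff (m k d : ℕ) (Ts : Fin d → Finset (Fin m)) (i : Fin m) :
    PackingElem m k d → ℝ
  | Sum.inl (i', _) => if i' = i then 1 / (k : ℝ) else 0
  | Sum.inr r => if i ∈ Ts r then 2 / (m : ℝ) else 1 / ((k : ℝ) * m)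

/-- The linear loss `ℓ_i(S) = Σ_{e ∈ S} c_i(e)` of the set-packing reduction. -/
noncomputable def linLoss (m k d : ℕ) (Ts : Fin d → Finset (Fin m)) (i : Fin m)
    (S : Finset (PackingElem m k d)) : ℝ :=
  ∑ e ∈ S, lossCoeff m k d Ts i e

/-- The optimal Bayesian oracle for the set-packing hardness
instance: for any distribution `w` over the losses and any minimum-weight index
`i*`, the set `S* = {a_{i*,1}, …, a_{i*,k}}` has expected loss exactly `w_{i*}`
and is exactly optimal among all size-`k` sets. -/
theorem set_packing_reduction_bayesian_oracle
    (m k d : ℕ) (hm : 1 ≤ m) (hk : 1 ≤ k) (hd : 1 ≤ d)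
    (Ts : Fin d → Finset (Fin m))
    (w : Fin m → ℝ) (hw0 : ∀ i, 0 ≤ w i) (hw1 : ∑ i, w i = 1)
    (istar : Fin m) (hstar : ∀ i, w istar ≤ w i) :
    (∑ i, w i * linLoss m k d Ts i
        (Finset.univ.image fun j : Fin k => (Sum.inl (istar, j) : PackingElem m k d)))
      = w istar ∧
    ∀ S : Finset (PackingElem m k d), S.card = k →
      (∑ i, w i * linLoss m k d Ts i
          (Finset.univ.image fun j : Fin k => (Sum.inl (istar, j) : PackingElem m k d)))
        ≤ ∑ i, w i * linLoss m k d Ts i S := by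
  have hk0 : (0:ℝ) < k := by exact_mod_cast hk
  have hm0 : (0:ℝ) < m := by exact_mod_cast hm
  have hwm : w istar ≤ 1 / m := by
    rw [le_div_iff₀ hm0]
    calc w istar * m = ∑ _i : Fin m, w istar := by
          rw [Finset.sum_const, card_univ, Fintype.card_fin, nsmul_eq_mul]; ring
      _ ≤ ∑ i, w i := Finset.sum_le_sum fun i _ => hstar i
      _ = 1 := hw1
  have hswap : ∀ S : Finset (PackingElem m k d),
      ∑ i, w i * linLoss m k d Ts i S = ∑ e ∈ S, ∑ i, w i * lossCoeff m k d Ts i e := by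
    intro S
    simp only [linLoss, Finset.mul_sum]
    exact Finset.sum_comm
  have hinl : ∀ (i' : Fin m) (j : Fin k),
      ∑ i, w i * lossCoeff m k d Ts i (Sum.inl (i', j)) = w i' * (1/k) := by
    intro i' j
    simp only [lossCoeff]
    rw [Finset.sum_eq_single i']
    · simp
    · intro b _ hb
      simp [Ne.symm hb]
    · simp
  have hF : ∀ e, w istar / k ≤ ∑ i, w i * lossCoeff m k d Ts i e := by
    intro e
    match e with
    | Sum.inl (i', j) =>
      rw [hinl i' j, div_eq_mul_one_div]
      exact mul_le_mul_of_nonneg_right (hstar i') (by positivity)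
    | Sum.inr r =>
      have h1 : ∑ i, w i * (1/((k:ℝ)*m)) ≤ ∑ i, w i * lossCoeff m k d Ts i (Sum.inr r) := by
        apply Finset.sum_le_sum
        intro i _
        simp only [lossCoeff]
        apply mul_le_mul_of_nonneg_left _ (hw0 i)
        split
        · have hk1 : (1:ℝ) ≤ k := by exact_mod_cast hk
          rw [div_le_div_iff₀ (by positivity) hm0]
          nlinarith
        · exact le_refl _
      calc w istar / k ≤ (1/m) / k := by
            gcongr
        _ = ∑ i, w i * (1/((k:ℝ)*m)) := by
            rw [← Finset.sum_mul, hw1]; field_simp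
        _ ≤ _ := h1
  set Sstar := Finset.univ.image fun j : Fin k => (Sum.inl (istar, j) : PackingElem m k d)
    with hSstar
  have hinj : Function.Injective fun j : Fin k => (Sum.inl (istar, j) : PackingElem m k d) := by
    intro a b hab
    simpa using hab
  have hval : ∑ i, w i * linLoss m k d Ts i Sstar = w istar := by
    rw [hswap, hSstar, Finset.sum_image (fun a _ b _ h => hinj h)]
    simp only [hinl]
    rw [Finset.sum_const, card_univ, Fintype.card_fin, nsmul_eq_mul]
    field_simp
  refine ⟨hval, fun S hS => ?_⟩
  rw [hval, hswap]
  calc w istar = S.card * (w istar / k) := by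
        rw [hS]; field_simp
    _ = ∑ _e ∈ S, w istar / k := by
        rw [Finset.sum_const, nsmul_eq_mul]
    _ ≤ ∑ e ∈ S, ∑ i, w i * lossCoeff m k d Ts i e :=
        Finset.sum_le_sum fun e _ => hF e
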